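/- On a complete graph, for any finitely supported f and T > 0, the function x ↦ max_{t∈[0,T]} Γ(P_t f)(x) belongs to ℓ¹(V,m), with ‖max_{[0,T]} Γ(P_t f)‖_{ℓ¹_m} ≤ ‖Γ(f)‖_{ℓ¹_m} + C T ‖Δf‖_{ℓ²_m}(‖f‖_{ℓ²_m} + ‖Δ²f‖_{ℓ²_m}). -/

import Mathlib

open scoped BigOperators
open Filter

/-- The carré du champ operator. -/
noncomputable def gam {V : Type*} (m : V → ℝ) (μ : V → V → ℝ) (f g : V → ℝ) (x : V) : ℝ :=
  (1 / (2 * m x)) * ∑' y, μ x y * (f y - f x) * (g y - g x)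

/-- The formal graph Laplacian. -/
noncomputable def lap {V : Type*} (m : V → ℝ) (μ : V → V → ℝ) (f : V → ℝ) (x : V) : ℝ :=
  (1 / m x) * ∑' y, μ x y * (f y - f x)

/-- The Dirichlet energy `Q(f) = (1/2) ∑_{x,y} μ_{xy} (f y - f x)²`. -/
noncomputable def QN {V : Type*} (μ : V → V → ℝ) (f : V → ℝ) : ℝ :=
  (1 / 2) * ∑' p : V × V, μ p.1 p.2 * (f p.2 - f p.1) ^ 2

/-- The `ℓ²(V,m)` norm. -/
noncomputable def l2n {V : Type*} (m : V → ℝ) (f : V → ℝ) : ℝ :=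
  Real.sqrt (∑' x, f x ^ 2 * m x)

/-- The iterated carré du champ `Γ₂(f) = (1/2) Δ Γ(f) - Γ(f, Δ f)`. -/
noncomputable def gam2 {V : Type*} (m : V → ℝ) (μ : V → V → ℝ) (f : V → ℝ) (x : V) : ℝ :=
  (1 / 2) * lap m μ (fun y => gam m μ f f y) x - gam m μ f (lap m μ f) x

section Helpers

variable {V : Type*} {m : V → ℝ} {μ : V → V → ℝ}

private lemma exists_ne_zero_of_tsum_ne_zero {h : V → ℝ} (hx : (∑' y, h y) ≠ 0) :
    ∃ y, h y ≠ 0 := by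
  by_contra hc
  push_neg at hc
  apply hx
  have : h = fun _ => (0 : ℝ) := funext hc
  rw [this, tsum_zero]

private lemma summable_of_fin_supp {h : V → ℝ} (hfin : (Function.support h).Finite) :
    Summable h :=
  summable_of_ne_finset_zero (s := hfin.toFinset) fun x hx => by
    by_contra h0
    exact hx (hfin.mem_toFinset.2 h0)

private lemma sq_m_summable {h : V → ℝ} (hfin : (Function.support h).Finite) :
    Summable fun x => h x ^ 2 * m x := by
  apply summable_of_fin_supp
  apply hfin.subset
  intro x hx
  simp only [Function.mem_support] at hx ⊢
  intro h0
  apply hx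
  rw [h0]
  ring

private lemma mu_term_summable (hlf : ∀ x, (Function.support (μ x)).Finite) (x : V)
    (a : V → ℝ) : Summable fun y => μ x y * a y :=
  summable_of_ne_finset_zero (s := (hlf x).toFinset) fun y hy => by
    have h0 : μ x y = 0 := by
      by_contra h
      exact hy ((hlf x).mem_toFinset.2 h)
    simp [h0]

private lemma gam_eq_sum (hlf : ∀ x, (Function.support (μ x)).Finite) (u v : V → ℝ) (x : V)
    {s : Finset V} (hs : ∀ y, μ x y ≠ 0 → y ∈ s) :
    gam m μ u v x = (1 / (2 * m x)) * ∑ y ∈ s, μ x y * (u y - u x) * (v y - v x) := by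
  unfold gam
  congr 1
  refine tsum_eq_sum fun y hy => ?_
  have h0 : μ x y = 0 := by
    by_contra h
    exact hy (hs y h)
  simp [h0]

private lemma gam_mul_m (hm : ∀ x, 0 < m x) (hlf : ∀ x, (Function.support (μ x)).Finite)
    (u v : V → ℝ) (x : V) {s : Finset V} (hs : ∀ y, μ x y ≠ 0 → y ∈ s) :
    gam m μ u v x * m x = (1 / 2) * ∑ y ∈ s, μ x y * (u y - u x) * (v y - v x) := by
  rw [gam_eq_sum hlf u v x hs]
  have h := (hm x).ne'
  field_simp

private lemma gam_self_mul_m (hm : ∀ x, 0 < m x) (hlf : ∀ x, (Function.support (μ x)).Finite)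
    (u : V → ℝ) (x : V) {s : Finset V} (hs : ∀ y, μ x y ≠ 0 → y ∈ s) :
    gam m μ u u x * m x = (1 / 2) * ∑ y ∈ s, μ x y * (u y - u x) ^ 2 := by
  rw [gam_mul_m hm hlf u u x hs]
  congr 1
  exact Finset.sum_congr rfl fun y _ => by ring

private lemma lap_mul_m (hm : ∀ x, 0 < m x) (u : V → ℝ) (x : V)
    {s : Finset V} (hs : ∀ y, μ x y ≠ 0 → y ∈ s) :
    lap m μ u x * m x = ∑ y ∈ s, μ x y * (u y - u x) := by
  unfold lap
  rw [tsum_eq_sum (s := s) (fun y hy => by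
    have h0 : μ x y = 0 := by
      by_contra h
      exact hy (hs y h)
    simp [h0])]
  have h := (hm x).ne'
  field_simp

private lemma tsum_sq_eq (hm : ∀ x, 0 < m x) (hlf : ∀ x, (Function.support (μ x)).Finite)
    (u : V → ℝ) (x : V) :
    (∑' y, μ x y * (u y - u x) ^ 2) = 2 * (gam m μ u u x * m x) := by
  rw [tsum_eq_sum (s := (hlf x).toFinset) (fun y hy => by
    have h0 : μ x y = 0 := by
      by_contra h
      exact hy ((hlf x).mem_toFinset.2 h)
    simp [h0])]
  rw [gam_self_mul_m hm hlf u x (fun y hy => (hlf x).mem_toFinset.2 hy)]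
  ring

private lemma gam_nonneg (hm : ∀ x, 0 < m x) (hnn : ∀ x y, 0 ≤ μ x y)
    (hlf : ∀ x, (Function.support (μ x)).Finite) (u : V → ℝ) (x : V) :
    0 ≤ gam m μ u u x := by
  rw [gam_eq_sum hlf u u x (fun y hy => (hlf x).mem_toFinset.2 hy)]
  have hx := hm x
  apply mul_nonneg (by positivity)
  apply Finset.sum_nonneg
  intro y _
  have h : μ x y * (u y - u x) * (u y - u x) = μ x y * (u y - u x) ^ 2 := by ring
  rw [h]
  exact mul_nonneg (hnn x y) (sq_nonneg _)

private lemma gam_abs_le (hm : ∀ x, 0 < m x) (hnn : ∀ x y, 0 ≤ μ x y)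
    (hlf : ∀ x, (Function.support (μ x)).Finite) (u v : V → ℝ) (x : V) :
    2 * |gam m μ u v x| ≤ gam m μ u u x + gam m μ v v x := by
  have hmem : ∀ y, μ x y ≠ 0 → y ∈ (hlf x).toFinset := fun y hy => (hlf x).mem_toFinset.2 hy
  rw [gam_eq_sum hlf u v x hmem, gam_eq_sum hlf u u x hmem, gam_eq_sum hlf v v x hmem]
  have hx := hm x
  have hc : (0:ℝ) ≤ 1 / (2 * m x) := by positivity
  rw [abs_mul, abs_of_nonneg hc, ← mul_add]
  rw [show 2 * (1 / (2 * m x) * |∑ y ∈ (hlf x).toFinset, μ x y * (u y - u x) * (v y - v x)|)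
      = 1 / (2 * m x) * (2 * |∑ y ∈ (hlf x).toFinset, μ x y * (u y - u x) * (v y - v x)|) from by ring]
  apply mul_le_mul_of_nonneg_left ?_ hc
  have h1 : |∑ y ∈ (hlf x).toFinset, μ x y * (u y - u x) * (v y - v x)|
      ≤ ∑ y ∈ (hlf x).toFinset, |μ x y * (u y - u x) * (v y - v x)| :=
    Finset.abs_sum_le_sum_abs _ _
  have h2 : ∑ y ∈ (hlf x).toFinset, 2 * |μ x y * (u y - u x) * (v y - v x)|
      ≤ ∑ y ∈ (hlf x).toFinset, (μ x y * (u y - u x) * (u y - u x) + μ x y * (v y - v x) * (v y - v x)) := by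
    apply Finset.sum_le_sum
    intro y _
    rw [abs_mul, abs_mul, abs_of_nonneg (hnn x y)]
    have ha : μ x y * |u y - u x| ^ 2 = μ x y * (u y - u x) * (u y - u x) := by
      rw [sq_abs]; ring
    have hb : μ x y * |v y - v x| ^ 2 = μ x y * (v y - v x) * (v y - v x) := by
      rw [sq_abs]; ring
    nlinarith [mul_nonneg (hnn x y) (sq_nonneg (|u y - u x| - |v y - v x|)), ha, hb,
      abs_nonneg (u y - u x), abs_nonneg (v y - v x)]
  rw [Finset.sum_add_distrib] at h2
  calc 2 * |∑ y ∈ (hlf x).toFinset, μ x y * (u y - u x) * (v y - v x)|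
      ≤ 2 * ∑ y ∈ (hlf x).toFinset, |μ x y * (u y - u x) * (v y - v x)| := by linarith
    _ = ∑ y ∈ (hlf x).toFinset, 2 * |μ x y * (u y - u x) * (v y - v x)| := Finset.mul_sum _ _ _
    _ ≤ _ := h2

private lemma mu_swap (hsym : ∀ x y, μ x y = μ y x) (N : Finset V) (h : V → V → ℝ) :
    ∑ x ∈ N, ∑ y ∈ N, μ x y * h x y = ∑ x ∈ N, ∑ y ∈ N, μ x y * h y x := by
  rw [Finset.sum_comm]
  exact Finset.sum_congr rfl fun x _ => Finset.sum_congr rfl fun y _ => by rw [hsym y x]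

private lemma green (hm : ∀ x, 0 < m x) (hsym : ∀ x y, μ x y = μ y x)
    (hlf : ∀ x, (Function.support (μ x)).Finite)
    (u g : V → ℝ) (s : Finset V) (hg : ∀ x, g x ≠ 0 → x ∈ s)
    (N : Finset V) (hsN : s ⊆ N) (hnb : ∀ x ∈ s, ∀ y, μ x y ≠ 0 → y ∈ N) :
    ∑ x ∈ s, lap m μ u x * g x * m x
      = -(1 / 2) * ∑ x ∈ N, ∑ y ∈ N, μ x y * (u y - u x) * (g y - g x) := by
  classical
  have hz : ∀ x ∈ N, x ∉ s → ∑ y ∈ N, μ x y * (u y - u x) * g x = 0 := by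
    intro x _ hx
    have hgx : g x = 0 := by
      by_contra h
      exact hx (hg x h)
    simp [hgx]
  have e1 : ∑ x ∈ s, lap m μ u x * g x * m x
      = ∑ x ∈ N, ∑ y ∈ N, μ x y * (u y - u x) * g x := by
    rw [← Finset.sum_subset hsN hz]
    apply Finset.sum_congr rfl
    intro x hx
    have hlm := lap_mul_m hm u x (s := N) (fun y hy => hnb x hx y hy)
    calc lap m μ u x * g x * m x = lap m μ u x * m x * g x := by ring
      _ = (∑ y ∈ N, μ x y * (u y - u x)) * g x := by rw [hlm]
      _ = ∑ y ∈ N, μ x y * (u y - u x) * g x := Finset.sum_mul _ _ _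
  have e2 : ∑ x ∈ N, ∑ y ∈ N, μ x y * (u y - u x) * g x
      = ∑ x ∈ N, ∑ y ∈ N, μ x y * ((u x - u y) * g y) := by
    have h := mu_swap hsym N (fun a b => (u b - u a) * g a)
    rw [← h]
    exact Finset.sum_congr rfl fun x _ => Finset.sum_congr rfl fun y _ => by ring
  have e3 : (∑ x ∈ N, ∑ y ∈ N, μ x y * (u y - u x) * (g y - g x))
      + ((∑ x ∈ N, ∑ y ∈ N, μ x y * ((u x - u y) * g y))
        + (∑ x ∈ N, ∑ y ∈ N, μ x y * (u y - u x) * g x)) = 0 := by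
    rw [← Finset.sum_add_distrib, ← Finset.sum_add_distrib]
    apply Finset.sum_eq_zero
    intro x _
    rw [← Finset.sum_add_distrib, ← Finset.sum_add_distrib]
    apply Finset.sum_eq_zero
    intro y _
    ring
  linarith [e1, e2, e3]

private lemma sqrt_mul_le_half {a b : ℝ} (ha : 0 ≤ a) (hb : 0 ≤ b) :
    Real.sqrt (a * b) ≤ (a + b) / 2 := by
  have h : a * b ≤ ((a + b) / 2) ^ 2 := by nlinarith [sq_nonneg (a - b)]
  calc Real.sqrt (a * b) ≤ Real.sqrt (((a + b) / 2) ^ 2) := Real.sqrt_le_sqrt h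
    _ = (a + b) / 2 := Real.sqrt_sq (by linarith)

private lemma cs_l2 (hm : ∀ x, 0 < m x) (w u : V → ℝ)
    (hw : Summable fun x => w x ^ 2 * m x) (hu : Summable fun x => u x ^ 2 * m x)
    (s : Finset V) :
    ∑ x ∈ s, |w x| * |u x| * m x ≤ l2n m u * l2n m w := by
  have h0 : 0 ≤ ∑ x ∈ s, |w x| * |u x| * m x :=
    Finset.sum_nonneg fun x _ => mul_nonneg (mul_nonneg (abs_nonneg _) (abs_nonneg _)) (hm x).le
  have h1 : ∑ x ∈ s, |w x| * |u x| * m x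
      = ∑ x ∈ s, (|w x| * Real.sqrt (m x)) * (|u x| * Real.sqrt (m x)) := by
    refine Finset.sum_congr rfl fun x _ => ?_
    have hs := Real.mul_self_sqrt (hm x).le
    calc |w x| * |u x| * m x = |w x| * |u x| * (Real.sqrt (m x) * Real.sqrt (m x)) := by rw [hs]
      _ = (|w x| * Real.sqrt (m x)) * (|u x| * Real.sqrt (m x)) := by ring
  have h2 := Finset.sum_mul_sq_le_sq_mul_sq s (fun x => |w x| * Real.sqrt (m x))
    (fun x => |u x| * Real.sqrt (m x))
  have h3 : ∑ x ∈ s, (|w x| * Real.sqrt (m x)) ^ 2 = ∑ x ∈ s, w x ^ 2 * m x :=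
    Finset.sum_congr rfl fun x _ => by rw [mul_pow, sq_abs, Real.sq_sqrt (hm x).le]
  have h4 : ∑ x ∈ s, (|u x| * Real.sqrt (m x)) ^ 2 = ∑ x ∈ s, u x ^ 2 * m x :=
    Finset.sum_congr rfl fun x _ => by rw [mul_pow, sq_abs, Real.sq_sqrt (hm x).le]
  have hnn1 : 0 ≤ ∑ x ∈ s, w x ^ 2 * m x :=
    Finset.sum_nonneg fun x _ => mul_nonneg (sq_nonneg _) (hm x).le
  have hnn2 : 0 ≤ ∑ x ∈ s, u x ^ 2 * m x :=
    Finset.sum_nonneg fun x _ => mul_nonneg (sq_nonneg _) (hm x).le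
  have hsw : ∑ x ∈ s, w x ^ 2 * m x ≤ ∑' x, w x ^ 2 * m x :=
    Summable.sum_le_tsum s (fun x _ => mul_nonneg (sq_nonneg _) (hm x).le) hw
  have hsu : ∑ x ∈ s, u x ^ 2 * m x ≤ ∑' x, u x ^ 2 * m x :=
    Summable.sum_le_tsum s (fun x _ => mul_nonneg (sq_nonneg _) (hm x).le) hu
  have h5 : (∑ x ∈ s, |w x| * |u x| * m x) ^ 2
      ≤ (∑' x, u x ^ 2 * m x) * (∑' x, w x ^ 2 * m x) := by
    rw [h1]
    refine le_trans h2 ?_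
    rw [h3, h4]
    calc (∑ x ∈ s, w x ^ 2 * m x) * (∑ x ∈ s, u x ^ 2 * m x)
        ≤ (∑' x, w x ^ 2 * m x) * (∑' x, u x ^ 2 * m x) :=
          mul_le_mul hsw hsu hnn2 (le_trans hnn1 hsw)
      _ = (∑' x, u x ^ 2 * m x) * (∑' x, w x ^ 2 * m x) := mul_comm _ _
  have h6 : l2n m u * l2n m w
      = Real.sqrt ((∑' x, u x ^ 2 * m x) * (∑' x, w x ^ 2 * m x)) := by
    unfold l2n
    rw [Real.sqrt_mul (tsum_nonneg fun x => mul_nonneg (sq_nonneg _) (hm x).le)]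
  rw [h6]
  calc ∑ x ∈ s, |w x| * |u x| * m x
      = Real.sqrt ((∑ x ∈ s, |w x| * |u x| * m x) ^ 2) := (Real.sqrt_sq h0).symm
    _ ≤ _ := Real.sqrt_le_sqrt h5

private lemma lap_fin_supp (hsym : ∀ x y, μ x y = μ y x)
    (hlf : ∀ x, (Function.support (μ x)).Finite)
    (f : V → ℝ) (hf : (Function.support f).Finite) :
    (Function.support (lap m μ f)).Finite := by
  apply Set.Finite.subset (hf.union (Set.Finite.biUnion hf fun y _ => hlf y))
  intro x hx
  simp only [Function.mem_support] at hx
  have ht : (∑' y, μ x y * (f y - f x)) ≠ 0 := by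
    intro h
    apply hx
    unfold lap
    rw [h, mul_zero]
  obtain ⟨y, hy⟩ := exists_ne_zero_of_tsum_ne_zero ht
  have hμ : μ x y ≠ 0 := by
    intro h
    apply hy
    rw [h]
    ring
  have hfy : f y ≠ f x := by
    intro h
    apply hy
    rw [h]
    ring
  by_cases hfx : f x = 0
  · have hfy0 : f y ≠ 0 := fun h => hfy (by rw [h, hfx])
    refine Set.mem_union_right _ ?_
    refine Set.mem_biUnion hfy0 ?_
    show μ y x ≠ 0
    rw [hsym y x]
    exact hμ
  · exact Set.mem_union_left _ hfx

private lemma gam_fin_supp (hsym : ∀ x y, μ x y = μ y x)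
    (hlf : ∀ x, (Function.support (μ x)).Finite)
    (f : V → ℝ) (hf : (Function.support f).Finite) :
    (Function.support fun x => gam m μ f f x * m x).Finite := by
  apply Set.Finite.subset (hf.union (Set.Finite.biUnion hf fun y _ => hlf y))
  intro x hx
  simp only [Function.mem_support] at hx
  have hg : gam m μ f f x ≠ 0 := by
    intro h
    apply hx
    rw [h, zero_mul]
  have ht : (∑' y, μ x y * (f y - f x) * (f y - f x)) ≠ 0 := by
    intro h
    apply hg
    unfold gam
    rw [h, mul_zero]
  obtain ⟨y, hy⟩ := exists_ne_zero_of_tsum_ne_zero ht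
  have hμ : μ x y ≠ 0 := by
    intro h
    apply hy
    rw [h]
    ring
  have hfy : f y ≠ f x := by
    intro h
    apply hy
    rw [h]
    ring
  by_cases hfx : f x = 0
  · have hfy0 : f y ≠ 0 := fun h => hfy (by rw [h, hfx])
    refine Set.mem_union_right _ ?_
    refine Set.mem_biUnion hfy0 ?_
    show μ y x ≠ 0
    rw [hsym y x]
    exact hμ
  · exact Set.mem_union_left _ hfx

private lemma cutoff_bound (hm : ∀ x, 0 < m x) (hsym : ∀ x y, μ x y = μ y x)
    (hnn : ∀ x y, 0 ≤ μ x y) (hlf : ∀ x, (Function.support (μ x)).Finite)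
    (u : V → ℝ) (hu : Summable fun x => u x ^ 2 * m x)
    (hw : Summable fun x => lap m μ u x ^ 2 * m x)
    (ζ : V → ℝ) (hζ0 : ∀ x, 0 ≤ ζ x) (hζ1 : ∀ x, ζ x ≤ 1)
    (hζfin : (Function.support ζ).Finite)
    (ε : ℝ) (hε : 0 ≤ ε)
    (hζgam : ∀ x, (∑' y, μ x y * (ζ y - ζ x) ^ 2) ≤ ε * m x)
    (G : Finset V) :
    ∑ x ∈ G, ζ x ^ 2 * (gam m μ u u x * m x)
      ≤ (4 / 3) * (l2n m u * l2n m (lap m μ u)) + (8 / 3) * (∑' x, u x ^ 2 * m x) * ε := by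
  classical
  have hM0 : 0 ≤ ∑' x, u x ^ 2 * m x :=
    tsum_nonneg fun x => mul_nonneg (sq_nonneg _) (hm x).le
  set s : Finset V := hζfin.toFinset with hsdef
  set N : Finset V := s ∪ s.biUnion (fun x => (hlf x).toFinset) with hNdef
  have hsN : s ⊆ N := Finset.subset_union_left
  have hζmem : ∀ x, ζ x ≠ 0 → x ∈ s := fun x hx => hζfin.mem_toFinset.2 hx
  have hζout : ∀ x, x ∉ s → ζ x = 0 := fun x hx => by
    by_contra h
    exact hx (hζmem x h)
  have hnb : ∀ x ∈ s, ∀ y, μ x y ≠ 0 → y ∈ N := fun x hx y hy =>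
    Finset.mem_union_right _ (Finset.mem_biUnion.2 ⟨x, hx, (hlf x).mem_toFinset.2 hy⟩)
  have hgm0 : ∀ x, 0 ≤ gam m μ u u x * m x := fun x =>
    mul_nonneg (gam_nonneg hm hnn hlf u x) (hm x).le
  set B : ℝ := ∑ x ∈ N, ζ x ^ 2 * (gam m μ u u x * m x) with hBdef
  have hB0 : 0 ≤ B := Finset.sum_nonneg fun x _ => mul_nonneg (sq_nonneg _) (hgm0 x)
  -- G-partial sums are below B
  have hGB : ∑ x ∈ G, ζ x ^ 2 * (gam m μ u u x * m x) ≤ B := by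
    have h1 : ∑ x ∈ G ∩ N, ζ x ^ 2 * (gam m μ u u x * m x)
        = ∑ x ∈ G, ζ x ^ 2 * (gam m μ u u x * m x) :=
      Finset.sum_subset Finset.inter_subset_left (fun x hxG hx => by
        have hxN : x ∉ N := fun hN' => hx (Finset.mem_inter.2 ⟨hxG, hN'⟩)
        have h0 : ζ x = 0 := hζout x (fun hs' => hxN (hsN hs'))
        simp [h0])
    rw [← h1]
    exact Finset.sum_le_sum_of_subset_of_nonneg Finset.inter_subset_right
      (fun x _ _ => mul_nonneg (sq_nonneg _) (hgm0 x))
  -- Green's formula with test function ζ² u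
  set gz : V → ℝ := fun x => ζ x ^ 2 * u x with hgzdef
  have hgzsupp : ∀ x, gz x ≠ 0 → x ∈ s := fun x hx => hζmem x (fun h0 => hx (by
    simp only [hgzdef, h0]
    ring))
  have hgr := green hm hsym hlf u gz s hgzsupp N hsN hnb
  set E : ℝ := ∑ x ∈ s, lap m μ u x * gz x * m x with hEdef
  set Tc : ℝ := ∑ x ∈ N, ∑ y ∈ N, μ x y * ((u y - u x) * (u x * (ζ y ^ 2 - ζ x ^ 2)))
    with hTcdef
  have inner_eq : ∀ x, ζ x ≠ 0 → ∑ y ∈ N, μ x y * (u y - u x) ^ 2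
      = 2 * (gam m μ u u x * m x) := by
    intro x hx
    rw [gam_self_mul_m hm hlf u x (fun y hy => hnb x (hζmem x hx) y hy)]
    ring
  have hA2 : ∑ x ∈ N, ∑ y ∈ N, μ x y * ((u y - u x) ^ 2 * ζ x ^ 2) = 2 * B := by
    rw [hBdef, Finset.mul_sum]
    apply Finset.sum_congr rfl
    intro x _
    by_cases h0 : ζ x = 0
    · simp [h0]
    · have h1 : ∑ y ∈ N, μ x y * ((u y - u x) ^ 2 * ζ x ^ 2)
          = ζ x ^ 2 * ∑ y ∈ N, μ x y * (u y - u x) ^ 2 := by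
        rw [Finset.mul_sum]
        exact Finset.sum_congr rfl fun y _ => by ring
      rw [h1, inner_eq x h0]
      ring
  have hA1 : ∑ x ∈ N, ∑ y ∈ N, μ x y * ((u y - u x) ^ 2 * ζ y ^ 2) = 2 * B := by
    have h2 := mu_swap hsym N (fun a b => (u b - u a) ^ 2 * ζ b ^ 2)
    rw [h2, ← hA2]
    exact Finset.sum_congr rfl fun x _ => Finset.sum_congr rfl fun y _ => by ring
  have hDD : ∑ x ∈ N, ∑ y ∈ N, μ x y * (u y - u x) * (gz y - gz x)
      = (∑ x ∈ N, ∑ y ∈ N, μ x y * ((u y - u x) ^ 2 * ζ y ^ 2)) + Tc := by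
    rw [hTcdef, ← Finset.sum_add_distrib]
    apply Finset.sum_congr rfl
    intro x _
    rw [← Finset.sum_add_distrib]
    apply Finset.sum_congr rfl
    intro y _
    simp only [hgzdef]
    ring
  rw [hDD, hA1] at hgr
  -- E bound
  have hE : |E| ≤ l2n m u * l2n m (lap m μ u) := by
    have h1 : |E| ≤ ∑ x ∈ s, |lap m μ u x| * |u x| * m x := by
      refine le_trans (Finset.abs_sum_le_sum_abs _ _) (Finset.sum_le_sum ?_)
      intro x _
      have hζsq : ζ x ^ 2 ≤ 1 := by nlinarith [hζ0 x, hζ1 x]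
      have habs : |lap m μ u x * gz x * m x| = |lap m μ u x| * (ζ x ^ 2 * |u x|) * m x := by
        simp only [hgzdef]
        rw [abs_mul, abs_mul, abs_of_pos (hm x), abs_mul, abs_of_nonneg (sq_nonneg (ζ x))]
      rw [habs]
      nlinarith [mul_nonneg (mul_nonneg (abs_nonneg (lap m μ u x)) (abs_nonneg (u x))) (hm x).le,
        sq_nonneg (ζ x), abs_nonneg (lap m μ u x), abs_nonneg (u x), (hm x).le]
    exact le_trans h1 (cs_l2 hm (lap m μ u) u hw hu s)
  -- Tc bound via Cauchy-Schwarz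
  have hTc_abs : |Tc| ≤ (B + 8 * (∑' x, u x ^ 2 * m x) * ε) / 2 := by
    set Q : Finset (V × V) := N ×ˢ N with hQdef
    set F : V × V → ℝ := fun p => Real.sqrt (μ p.1 p.2) * (|u p.2 - u p.1| * (ζ p.1 + ζ p.2))
      with hFdef
    set Gf : V × V → ℝ := fun p => Real.sqrt (μ p.1 p.2) * (|u p.1| * |ζ p.2 - ζ p.1|)
      with hGdef
    have hF0 : ∀ p, 0 ≤ F p := fun p => mul_nonneg (Real.sqrt_nonneg _)
      (mul_nonneg (abs_nonneg _) (add_nonneg (hζ0 _) (hζ0 _)))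
    have hG0 : ∀ p, 0 ≤ Gf p := fun p => mul_nonneg (Real.sqrt_nonneg _)
      (mul_nonneg (abs_nonneg _) (abs_nonneg _))
    have hTcQ : Tc = ∑ p ∈ Q, μ p.1 p.2 * ((u p.2 - u p.1) * (u p.1 * (ζ p.2 ^ 2 - ζ p.1 ^ 2))) := by
      rw [hTcdef, hQdef]
      exact (Finset.sum_product' N N
        (fun a b => μ a b * ((u b - u a) * (u a * (ζ b ^ 2 - ζ a ^ 2))))).symm
    have hterm : ∀ p : V × V,
        |μ p.1 p.2 * ((u p.2 - u p.1) * (u p.1 * (ζ p.2 ^ 2 - ζ p.1 ^ 2)))| ≤ F p * Gf p := by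
      intro p
      have hμ := hnn p.1 p.2
      have hss : Real.sqrt (μ p.1 p.2) * Real.sqrt (μ p.1 p.2) = μ p.1 p.2 :=
        Real.mul_self_sqrt hμ
      have habs : |μ p.1 p.2 * ((u p.2 - u p.1) * (u p.1 * (ζ p.2 ^ 2 - ζ p.1 ^ 2)))|
          = μ p.1 p.2 * (|u p.2 - u p.1| * (|u p.1| * |ζ p.2 ^ 2 - ζ p.1 ^ 2|)) := by
        rw [abs_mul, abs_mul, abs_mul, abs_of_nonneg hμ]
      rw [habs]
      have h2 : |ζ p.2 ^ 2 - ζ p.1 ^ 2| ≤ (ζ p.1 + ζ p.2) * |ζ p.2 - ζ p.1| := by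
        have e : ζ p.2 ^ 2 - ζ p.1 ^ 2 = (ζ p.1 + ζ p.2) * (ζ p.2 - ζ p.1) := by ring
        rw [e, abs_mul, abs_of_nonneg (add_nonneg (hζ0 _) (hζ0 _))]
      have hFG : F p * Gf p
          = μ p.1 p.2 * (|u p.2 - u p.1| * (|u p.1| * ((ζ p.1 + ζ p.2) * |ζ p.2 - ζ p.1|))) := by
        rw [hFdef, hGdef]
        calc Real.sqrt (μ p.1 p.2) * (|u p.2 - u p.1| * (ζ p.1 + ζ p.2))
              * (Real.sqrt (μ p.1 p.2) * (|u p.1| * |ζ p.2 - ζ p.1|))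
            = (Real.sqrt (μ p.1 p.2) * Real.sqrt (μ p.1 p.2))
              * (|u p.2 - u p.1| * (|u p.1| * ((ζ p.1 + ζ p.2) * |ζ p.2 - ζ p.1|))) := by ring
          _ = _ := by rw [hss]
      rw [hFG]
      have hmono : |u p.2 - u p.1| * (|u p.1| * |ζ p.2 ^ 2 - ζ p.1 ^ 2|)
          ≤ |u p.2 - u p.1| * (|u p.1| * ((ζ p.1 + ζ p.2) * |ζ p.2 - ζ p.1|)) :=
        mul_le_mul_of_nonneg_left (mul_le_mul_of_nonneg_left h2 (abs_nonneg _)) (abs_nonneg _)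
      exact mul_le_mul_of_nonneg_left hmono hμ
    have hsumF2 : ∑ p ∈ Q, F p ^ 2 ≤ 8 * B := by
      have h1 : ∀ p ∈ Q, F p ^ 2
          ≤ μ p.1 p.2 * ((u p.2 - u p.1) ^ 2 * (2 * ζ p.1 ^ 2 + 2 * ζ p.2 ^ 2)) := by
        intro p _
        have e : F p ^ 2 = μ p.1 p.2 * ((u p.2 - u p.1) ^ 2 * (ζ p.1 + ζ p.2) ^ 2) := by
          rw [hFdef]
          rw [mul_pow, mul_pow, Real.sq_sqrt (hnn _ _), sq_abs]
        rw [e]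
        refine mul_le_mul_of_nonneg_left ?_ (hnn _ _)
        refine mul_le_mul_of_nonneg_left ?_ (sq_nonneg _)
        nlinarith [sq_nonneg (ζ p.1 - ζ p.2)]
      calc ∑ p ∈ Q, F p ^ 2
          ≤ ∑ p ∈ Q, μ p.1 p.2 * ((u p.2 - u p.1) ^ 2 * (2 * ζ p.1 ^ 2 + 2 * ζ p.2 ^ 2)) :=
            Finset.sum_le_sum h1
        _ = ∑ x ∈ N, ∑ y ∈ N, μ x y * ((u y - u x) ^ 2 * (2 * ζ x ^ 2 + 2 * ζ y ^ 2)) := by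
            rw [hQdef]
            exact Finset.sum_product' N N
              (fun a b => μ a b * ((u b - u a) ^ 2 * (2 * ζ a ^ 2 + 2 * ζ b ^ 2)))
        _ = 2 * (∑ x ∈ N, ∑ y ∈ N, μ x y * ((u y - u x) ^ 2 * ζ x ^ 2))
            + 2 * (∑ x ∈ N, ∑ y ∈ N, μ x y * ((u y - u x) ^ 2 * ζ y ^ 2)) := by
            rw [Finset.mul_sum, Finset.mul_sum, ← Finset.sum_add_distrib]
            refine Finset.sum_congr rfl fun x _ => ?_
            rw [Finset.mul_sum, Finset.mul_sum, ← Finset.sum_add_distrib]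
            exact Finset.sum_congr rfl fun y _ => by ring
        _ = 8 * B := by rw [hA2, hA1]; ring
    have hsumG2 : ∑ p ∈ Q, Gf p ^ 2 ≤ (∑' x, u x ^ 2 * m x) * ε := by
      have h1 : ∑ p ∈ Q, Gf p ^ 2 = ∑ x ∈ N, ∑ y ∈ N, μ x y * (u x ^ 2 * (ζ y - ζ x) ^ 2) := by
        calc ∑ p ∈ Q, Gf p ^ 2
            = ∑ p ∈ Q, μ p.1 p.2 * (u p.1 ^ 2 * (ζ p.2 - ζ p.1) ^ 2) :=
              Finset.sum_congr rfl fun p _ => by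
                rw [hGdef]
                rw [mul_pow, mul_pow, Real.sq_sqrt (hnn _ _), sq_abs, sq_abs]
          _ = _ := by
              rw [hQdef]
              exact Finset.sum_product' N N
                (fun a b => μ a b * (u a ^ 2 * (ζ b - ζ a) ^ 2))
      rw [h1]
      have h2 : ∀ x ∈ N, ∑ y ∈ N, μ x y * (u x ^ 2 * (ζ y - ζ x) ^ 2)
          ≤ u x ^ 2 * (ε * m x) := by
        intro x _
        have h3 : ∑ y ∈ N, μ x y * (u x ^ 2 * (ζ y - ζ x) ^ 2)
            = u x ^ 2 * ∑ y ∈ N, μ x y * (ζ y - ζ x) ^ 2 := by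
          rw [Finset.mul_sum]
          exact Finset.sum_congr rfl fun y _ => by ring
        rw [h3]
        refine mul_le_mul_of_nonneg_left ?_ (sq_nonneg _)
        refine le_trans (Summable.sum_le_tsum N (fun y _ => mul_nonneg (hnn x y) (sq_nonneg _))
          (mu_term_summable hlf x _)) (hζgam x)
      calc ∑ x ∈ N, ∑ y ∈ N, μ x y * (u x ^ 2 * (ζ y - ζ x) ^ 2)
          ≤ ∑ x ∈ N, u x ^ 2 * (ε * m x) := Finset.sum_le_sum h2
        _ = ε * ∑ x ∈ N, u x ^ 2 * m x := by
            rw [Finset.mul_sum]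
            exact Finset.sum_congr rfl fun x _ => by ring
        _ ≤ ε * ∑' x, u x ^ 2 * m x := mul_le_mul_of_nonneg_left
            (Summable.sum_le_tsum N (fun x _ => mul_nonneg (sq_nonneg _) (hm x).le) hu) hε
        _ = (∑' x, u x ^ 2 * m x) * ε := mul_comm _ _
    have hcs := Finset.sum_mul_sq_le_sq_mul_sq Q F Gf
    have hFGsum0 : 0 ≤ ∑ p ∈ Q, F p * Gf p :=
      Finset.sum_nonneg fun p _ => mul_nonneg (hF0 p) (hG0 p)
    have h4 : (∑ p ∈ Q, F p * Gf p) ^ 2 ≤ (8 * B) * ((∑' x, u x ^ 2 * m x) * ε) :=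
      le_trans hcs (mul_le_mul hsumF2 hsumG2
        (Finset.sum_nonneg fun p _ => sq_nonneg _) (by linarith))
    have h5 : ∑ p ∈ Q, F p * Gf p ≤ Real.sqrt (B * (8 * (∑' x, u x ^ 2 * m x) * ε)) := by
      calc ∑ p ∈ Q, F p * Gf p = Real.sqrt ((∑ p ∈ Q, F p * Gf p) ^ 2) :=
            (Real.sqrt_sq hFGsum0).symm
        _ ≤ Real.sqrt ((8 * B) * ((∑' x, u x ^ 2 * m x) * ε)) := Real.sqrt_le_sqrt h4
        _ = Real.sqrt (B * (8 * (∑' x, u x ^ 2 * m x) * ε)) := by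
            congr 1
            ring
    have h6 : Real.sqrt (B * (8 * (∑' x, u x ^ 2 * m x) * ε))
        ≤ (B + 8 * (∑' x, u x ^ 2 * m x) * ε) / 2 :=
      sqrt_mul_le_half hB0 (by nlinarith)
    calc |Tc| = |∑ p ∈ Q, μ p.1 p.2 * ((u p.2 - u p.1) * (u p.1 * (ζ p.2 ^ 2 - ζ p.1 ^ 2)))| := by
          rw [hTcQ]
      _ ≤ ∑ p ∈ Q, |μ p.1 p.2 * ((u p.2 - u p.1) * (u p.1 * (ζ p.2 ^ 2 - ζ p.1 ^ 2)))| :=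
          Finset.abs_sum_le_sum_abs _ _
      _ ≤ ∑ p ∈ Q, F p * Gf p := Finset.sum_le_sum fun p _ => hterm p
      _ ≤ Real.sqrt (B * (8 * (∑' x, u x ^ 2 * m x) * ε)) := h5
      _ ≤ (B + 8 * (∑' x, u x ^ 2 * m x) * ε) / 2 := h6
  -- combine
  have h7 : B ≤ |E| + |Tc| / 2 := by
    have hB : B = -E - Tc / 2 := by linarith [hgr]
    linarith [neg_le_abs E, neg_le_abs Tc]
  have hchain : B ≤ (4 / 3) * (l2n m u * l2n m (lap m μ u))
      + (8 / 3) * (∑' x, u x ^ 2 * m x) * ε := by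
    linarith [hE, hTc_abs]
  exact le_trans hGB hchain

private lemma gam_l1 (hm : ∀ x, 0 < m x) (hsym : ∀ x y, μ x y = μ y x)
    (hnn : ∀ x y, 0 ≤ μ x y) (hlf : ∀ x, (Function.support (μ x)).Finite)
    (η : ℕ → V → ℝ)
    (hηfin : ∀ k, (Function.support (η k)).Finite)
    (hηmono : ∀ k x, η k x ≤ η (k + 1) x)
    (hηlim : ∀ x, Tendsto (fun k => η k x) atTop (nhds 1))
    (hηgam : ∀ k x, 1 ≤ k → gam m μ (η k) (η k) x ≤ 1 / (k : ℝ))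
    (u : V → ℝ) (hu : Summable fun x => u x ^ 2 * m x)
    (hw : Summable fun x => lap m μ u x ^ 2 * m x) :
    Summable (fun x => gam m μ u u x * m x) ∧
      (∑' x, gam m μ u u x * m x) = QN μ u := by
  classical
  have hgm0 : ∀ x, 0 ≤ gam m μ u u x * m x := fun x =>
    mul_nonneg (gam_nonneg hm hnn hlf u x) (hm x).le
  have hη1 : ∀ k x, η k x ≤ 1 := by
    intro k x
    have hmono : Monotone fun j => η j x := monotone_nat_of_le_succ fun j => hηmono j x
    exact ge_of_tendsto (hηlim x) (Filter.eventually_atTop.2 ⟨k, fun j hj => hmono hj⟩)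
  have key : ∀ G : Finset V, ∑ x ∈ G, gam m μ u u x * m x
      ≤ (4 / 3) * (l2n m u * l2n m (lap m μ u)) := by
    intro G
    have main : ∀ k : ℕ, 1 ≤ k →
        ∑ x ∈ G, max (η k x) 0 ^ 2 * (gam m μ u u x * m x)
          ≤ (4 / 3) * (l2n m u * l2n m (lap m μ u))
            + (8 / 3) * (∑' x, u x ^ 2 * m x) * (2 / (k : ℝ)) := by
      intro k hk
      have hk0 : (0:ℝ) < (k : ℝ) := by exact_mod_cast hk
      have hζfin : (Function.support (fun x => max (η k x) 0)).Finite := by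
        apply (hηfin k).subset
        intro x hx
        simp only [Function.mem_support] at hx ⊢
        intro h0
        apply hx
        simp [h0]
      have hζgam : ∀ x, (∑' y, μ x y * (max (η k y) 0 - max (η k x) 0) ^ 2)
          ≤ (2 / (k : ℝ)) * m x := by
        intro x
        have h1 : ∀ y, μ x y * (max (η k y) 0 - max (η k x) 0) ^ 2
            ≤ μ x y * (η k y - η k x) ^ 2 := by
          intro y
          refine mul_le_mul_of_nonneg_left ?_ (hnn x y)
          have h2 : |max (η k y) 0 - max (η k x) 0| ≤ |η k y - η k x| :=
            abs_max_sub_max_le_abs _ _ _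
          calc (max (η k y) 0 - max (η k x) 0) ^ 2
              = |max (η k y) 0 - max (η k x) 0| ^ 2 := (sq_abs _).symm
            _ ≤ |η k y - η k x| ^ 2 := pow_le_pow_left₀ (abs_nonneg _) h2 2
            _ = (η k y - η k x) ^ 2 := sq_abs _
        have h3 : (∑' y, μ x y * (max (η k y) 0 - max (η k x) 0) ^ 2)
            ≤ ∑' y, μ x y * (η k y - η k x) ^ 2 :=
          Summable.tsum_le_tsum h1 (mu_term_summable hlf x _) (mu_term_summable hlf x _)
        have h4 := tsum_sq_eq hm hlf (η k) x
        have h5 := hηgam k x hk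
        have h6 : 2 * (gam m μ (η k) (η k) x * m x) ≤ 2 / (k : ℝ) * m x := by
          have := mul_le_mul_of_nonneg_right h5 (hm x).le
          calc 2 * (gam m μ (η k) (η k) x * m x) ≤ 2 * (1 / (k : ℝ) * m x) := by linarith
            _ = 2 / (k : ℝ) * m x := by ring
        calc (∑' y, μ x y * (max (η k y) 0 - max (η k x) 0) ^ 2)
            ≤ ∑' y, μ x y * (η k y - η k x) ^ 2 := h3
          _ = 2 * (gam m μ (η k) (η k) x * m x) := h4
          _ ≤ 2 / (k : ℝ) * m x := h6
      have hcb := cutoff_bound hm hsym hnn hlf u hu hw (fun x => max (η k x) 0)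
        (fun x => le_max_right _ _) (fun x => max_le (hη1 k x) zero_le_one) hζfin
        (2 / (k : ℝ)) (by positivity) hζgam G
      simpa using hcb
    have hlim1 : Tendsto (fun k : ℕ => ∑ x ∈ G, max (η k x) 0 ^ 2 * (gam m μ u u x * m x))
        atTop (nhds (∑ x ∈ G, gam m μ u u x * m x)) := by
      refine tendsto_finset_sum G ?_
      intro x _
      have h1 : Tendsto (fun k : ℕ => max (η k x) 0) atTop (nhds 1) := by
        have h2 := (hηlim x).max (tendsto_const_nhds (x := (0:ℝ)))
        simpa using h2
      have h2 := (h1.pow 2).mul_const (gam m μ u u x * m x)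
      simpa using h2
    have hlim2 : Tendsto (fun k : ℕ => (4 / 3) * (l2n m u * l2n m (lap m μ u))
        + (8 / 3) * (∑' x, u x ^ 2 * m x) * (2 / (k : ℝ))) atTop
        (nhds ((4 / 3) * (l2n m u * l2n m (lap m μ u)) + 0)) := by
      refine Tendsto.add tendsto_const_nhds ?_
      have h3 : Tendsto (fun k : ℕ => (2:ℝ) / (k : ℝ)) atTop (nhds 0) :=
        tendsto_const_div_atTop_nhds_zero_nat 2
      have h4 := h3.const_mul ((8 / 3) * (∑' x, u x ^ 2 * m x))
      simpa [mul_assoc] using h4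
    have h5 := le_of_tendsto_of_tendsto hlim1 hlim2 (Filter.eventually_atTop.2 ⟨1, main⟩)
    simpa using h5
  have hS : Summable (fun x => gam m μ u u x * m x) := summable_of_sum_le hgm0 key
  refine ⟨hS, ?_⟩
  have hslice_summ : ∀ x, Summable fun y => μ x y * (u y - u x) ^ 2 := fun x =>
    mu_term_summable hlf x _
  have hslice : ∀ x, (∑' y, μ x y * (u y - u x) ^ 2) = 2 * (gam m μ u u x * m x) := fun x =>
    tsum_sq_eq hm hlf u x
  have hP : Summable (fun p : V × V => μ p.1 p.2 * (u p.2 - u p.1) ^ 2) := by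
    rw [summable_prod_of_nonneg (fun p => mul_nonneg (hnn _ _) (sq_nonneg _))]
    refine ⟨hslice_summ, ?_⟩
    have h1 : (fun x => ∑' y, μ x y * (u y - u x) ^ 2)
        = fun x => 2 * (gam m μ u u x * m x) := funext hslice
    rw [h1]
    exact hS.mul_left 2
  unfold QN
  rw [Summable.tsum_prod' hP hslice_summ]
  rw [tsum_congr hslice, tsum_mul_left]
  ring

private lemma phi_hasDeriv (hlf : ∀ x, (Function.support (μ x)).Finite)
    (P : ℝ → (V → ℝ) → V → ℝ)
    (hheat : ∀ (f : V → ℝ) (x : V) (t : ℝ), HasDerivAt (fun s => P s f x) (lap m μ (P t f) x) t)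
    (f : V → ℝ) (x : V) (t : ℝ) :
    HasDerivAt (fun s => gam m μ (P s f) (P s f) x)
      (2 * gam m μ (P t f) (lap m μ (P t f)) x) t := by
  classical
  have hmem : ∀ y, μ x y ≠ 0 → y ∈ (hlf x).toFinset := fun y hy => (hlf x).mem_toFinset.2 hy
  have heq : (fun s => gam m μ (P s f) (P s f) x)
      = fun s => (1 / (2 * m x)) * ∑ y ∈ (hlf x).toFinset,
          μ x y * (P s f y - P s f x) * (P s f y - P s f x) :=
    funext fun s => gam_eq_sum hlf (P s f) (P s f) x hmem
  rw [heq, gam_eq_sum hlf (P t f) (lap m μ (P t f)) x hmem]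
  have hterm : ∀ y ∈ (hlf x).toFinset,
      HasDerivAt (fun s => μ x y * (P s f y - P s f x) * (P s f y - P s f x))
        (μ x y * (2 * ((P t f y - P t f x) * (lap m μ (P t f) y - lap m μ (P t f) x)))) t := by
    intro y _
    have hd := (hheat f y t).sub (hheat f x t)
    have h2 := hd.mul hd
    have h3 := h2.const_mul (μ x y)
    have hfun : (fun s => μ x y * (P s f y - P s f x) * (P s f y - P s f x))
        = fun s => μ x y * ((P s f y - P s f x) * (P s f y - P s f x)) :=
      funext fun s => by ring
    rw [hfun]
    have hval : μ x y * ((lap m μ (P t f) y - lap m μ (P t f) x) * (P t f y - P t f x)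
          + (P t f y - P t f x) * (lap m μ (P t f) y - lap m μ (P t f) x))
        = μ x y * (2 * ((P t f y - P t f x) * (lap m μ (P t f) y - lap m μ (P t f) x))) := by
      ring
    rw [← hval]
    exact h3
  have hsum := (HasDerivAt.fun_sum hterm).const_mul (1 / (2 * m x))
  have h4 : ∑ y ∈ (hlf x).toFinset,
      μ x y * (2 * ((P t f y - P t f x) * (lap m μ (P t f) y - lap m μ (P t f) x)))
      = 2 * ∑ y ∈ (hlf x).toFinset,
          μ x y * (P t f y - P t f x) * (lap m μ (P t f) y - lap m μ (P t f) x) := by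
    rw [Finset.mul_sum]
    exact Finset.sum_congr rfl fun y _ => by ring
  have hval2 : (1 / (2 * m x)) * ∑ y ∈ (hlf x).toFinset,
      μ x y * (2 * ((P t f y - P t f x) * (lap m μ (P t f) y - lap m μ (P t f) x)))
      = 2 * ((1 / (2 * m x)) * ∑ y ∈ (hlf x).toFinset,
          μ x y * (P t f y - P t f x) * (lap m μ (P t f) y - lap m μ (P t f) x)) := by
    rw [h4]
    ring
  exact hval2 ▸ hsum

private lemma phi_cont (hlf : ∀ x, (Function.support (μ x)).Finite)
    (P : ℝ → (V → ℝ) → V → ℝ)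
    (hheat : ∀ (f : V → ℝ) (x : V) (t : ℝ), HasDerivAt (fun s => P s f x) (lap m μ (P t f) x) t)
    (f g : V → ℝ) (x : V) :
    Continuous fun s => gam m μ (P s f) (P s g) x := by
  have hc : ∀ h : V → ℝ, ∀ y, Continuous fun s => P s h y := fun h y =>
    continuous_iff_continuousAt.2 fun t => (hheat h y t).continuousAt
  have hmem : ∀ y, μ x y ≠ 0 → y ∈ (hlf x).toFinset := fun y hy => (hlf x).mem_toFinset.2 hy
  have heq : (fun s => gam m μ (P s f) (P s g) x)
      = fun s => (1 / (2 * m x)) * ∑ y ∈ (hlf x).toFinset,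
          μ x y * (P s f y - P s f x) * (P s g y - P s g x) :=
    funext fun s => gam_eq_sum hlf (P s f) (P s g) x hmem
  rw [heq]
  apply Continuous.mul continuous_const
  apply continuous_finset_sum
  intro y _
  exact (continuous_const.mul ((hc f y).sub (hc f x))).mul ((hc g y).sub (hc g x))

end Helpers

/-- On a complete graph, for finitely supported `f` and `T > 0`, the function
`x ↦ max_{t ∈ [0,T]} Γ(P_t f)(x)` is in `ℓ¹(V,m)` with
`‖max Γ(P_t f)‖₁ ≤ ‖Γ(f)‖₁ + C T ‖Δf‖₂ (‖f‖₂ + ‖Δ²f‖₂)`. -/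
theorem stmt9 {V : Type*} (m : V → ℝ) (μ : V → V → ℝ)
    (hm : ∀ x, 0 < m x) (hsym : ∀ x y, μ x y = μ y x)
    (hnn : ∀ x y, 0 ≤ μ x y) (hlf : ∀ x, (Function.support (μ x)).Finite)
    -- completeness of the graph: cut-off functions `η_k`
    (η : ℕ → V → ℝ)
    (hηfin : ∀ k, (Function.support (η k)).Finite)
    (hηmono : ∀ k x, η k x ≤ η (k + 1) x)
    (hηlim : ∀ x, Tendsto (fun k => η k x) atTop (nhds 1))
    (hηgam : ∀ k x, 1 ≤ k → gam m μ (η k) (η k) x ≤ 1 / (k : ℝ))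
    -- the heat semigroup `P t = e^{tΔ}` and its standard properties
    (P : ℝ → (V → ℝ) → V → ℝ)
    (hP0 : ∀ f, P 0 f = f)
    (hheat : ∀ (f : V → ℝ) (x : V) (t : ℝ), HasDerivAt (fun s => P s f x) (lap m μ (P t f) x) t)
    (hPcomm : ∀ f : V → ℝ, (Function.support f).Finite → ∀ t, P t (lap m μ f) = lap m μ (P t f))
    (hPl2 : ∀ f : V → ℝ, Summable (fun x => f x ^ 2 * m x) → ∀ t, 0 ≤ t →
      Summable (fun x => (P t f x) ^ 2 * m x) ∧ ∑' x, (P t f x) ^ 2 * m x ≤ ∑' x, f x ^ 2 * m x)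
    (hPsym : ∀ f g : V → ℝ, Summable (fun x => f x ^ 2 * m x) →
      Summable (fun x => g x ^ 2 * m x) → ∀ t, 0 ≤ t →
      ∑' x, P t f x * g x * m x = ∑' x, f x * P t g x * m x)
    (hPpos : ∀ f : V → ℝ, (∀ x, 0 ≤ f x) → ∀ t, 0 ≤ t → ∀ x, 0 ≤ P t f x)
    -- `C` is the universal constant from the energy estimate
    (C : ℝ) (hC : 0 < C)
    (hCenergy : ∀ f : V → ℝ, (Function.support f).Finite → ∀ t, 0 ≤ t →
      QN μ (P t f) ≤ C * l2n m f * l2n m (lap m μ f)) :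
    ∀ f : V → ℝ, (Function.support f).Finite → ∀ T : ℝ, 0 < T →
      Summable (fun x => (⨆ t : Set.Icc (0 : ℝ) T, gam m μ (P t f) (P t f) x) * m x) ∧
      ∑' x, (⨆ t : Set.Icc (0 : ℝ) T, gam m μ (P t f) (P t f) x) * m x ≤
        (∑' x, gam m μ f f x * m x) +
          C * T * l2n m (lap m μ f) * (l2n m f + l2n m (lap m μ (lap m μ f))) := by
  intro f hf T hT
  classical
  have hf2 : Summable fun x => f x ^ 2 * m x := sq_m_summable hf
  have hlapfin : (Function.support (lap m μ f)).Finite := lap_fin_supp hsym hlf f hf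
  have hlap2fin : (Function.support (lap m μ (lap m μ f))).Finite :=
    lap_fin_supp hsym hlf _ hlapfin
  have hflap2 : Summable fun x => lap m μ f x ^ 2 * m x := sq_m_summable hlapfin
  have hflap22 : Summable fun x => lap m μ (lap m μ f) x ^ 2 * m x := sq_m_summable hlap2fin
  have hgamsum : Summable (fun x => gam m μ f f x * m x) :=
    summable_of_fin_supp (gam_fin_supp hsym hlf f hf)
  -- the time derivative of Γ(P_t f)(x)
  have hderiv : ∀ (x : V) (t : ℝ), HasDerivAt (fun s => gam m μ (P s f) (P s f) x)
      (2 * gam m μ (P t f) (P t (lap m μ f)) x) t := by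
    intro x t
    have h := phi_hasDeriv hlf P hheat f x t
    rwa [← hPcomm f hf t] at h
  have hcont : ∀ x : V, Continuous fun s => 2 * gam m μ (P s f) (P s (lap m μ f)) x :=
    fun x => continuous_const.mul (phi_cont hlf P hheat f (lap m μ f) x)
  have habscont : ∀ x : V, Continuous fun s => |2 * gam m μ (P s f) (P s (lap m μ f)) x| :=
    fun x => (hcont x).abs
  have hint : ∀ x, IntervalIntegrable
      (fun s => |2 * gam m μ (P s f) (P s (lap m μ f)) x|) MeasureTheory.volume 0 T :=
    fun x => (habscont x).intervalIntegrable 0 T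
  -- pointwise bound on [0,T] via FTC
  have hbd : ∀ (x : V) (t : Set.Icc (0:ℝ) T),
      gam m μ (P (t : ℝ) f) (P (t : ℝ) f) x
        ≤ gam m μ f f x + ∫ s in (0:ℝ)..T, |2 * gam m μ (P s f) (P s (lap m μ f)) x| := by
    intro x t
    obtain ⟨t, ht0, htT⟩ := t
    have ftc : ∫ s in (0:ℝ)..t, 2 * gam m μ (P s f) (P s (lap m μ f)) x
        = gam m μ (P t f) (P t f) x - gam m μ (P 0 f) (P 0 f) x :=
      intervalIntegral.integral_eq_sub_of_hasDerivAt (fun s _ => hderiv x s)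
        ((hcont x).intervalIntegrable 0 t)
    have h0 : gam m μ (P 0 f) (P 0 f) x = gam m μ f f x := by rw [hP0 f]
    have h1 : ∫ s in (0:ℝ)..t, 2 * gam m μ (P s f) (P s (lap m μ f)) x
        ≤ ∫ s in (0:ℝ)..t, |2 * gam m μ (P s f) (P s (lap m μ f)) x| := by
      have h2 := intervalIntegral.abs_integral_le_integral_abs
        (f := fun s => 2 * gam m μ (P s f) (P s (lap m μ f)) x)
        (μ := MeasureTheory.volume) ht0
      have h3 := le_abs_self (∫ s in (0:ℝ)..t, 2 * gam m μ (P s f) (P s (lap m μ f)) x)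
      linarith
    have h4 : ∫ s in (0:ℝ)..t, |2 * gam m μ (P s f) (P s (lap m μ f)) x|
        ≤ ∫ s in (0:ℝ)..T, |2 * gam m μ (P s f) (P s (lap m μ f)) x| :=
      intervalIntegral.integral_mono_interval le_rfl ht0 htT
        (MeasureTheory.ae_of_all _ fun s => abs_nonneg _) (hint x)
    simp only []
    linarith
  haveI hne : Nonempty (Set.Icc (0:ℝ) T) := ⟨⟨0, le_refl 0, hT.le⟩⟩
  have hbdd : ∀ x, BddAbove (Set.range fun t : Set.Icc (0:ℝ) T =>
      gam m μ (P (t : ℝ) f) (P (t : ℝ) f) x) := by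
    intro x
    refine ⟨gam m μ f f x + ∫ s in (0:ℝ)..T, |2 * gam m μ (P s f) (P s (lap m μ f)) x|, ?_⟩
    rintro v ⟨t, rfl⟩
    exact hbd x t
  have hsup_le : ∀ x, (⨆ t : Set.Icc (0:ℝ) T, gam m μ (P (t : ℝ) f) (P (t : ℝ) f) x)
      ≤ gam m μ f f x + ∫ s in (0:ℝ)..T, |2 * gam m μ (P s f) (P s (lap m μ f)) x| :=
    fun x => ciSup_le (hbd x)
  have hsup_nn : ∀ x, 0 ≤ ⨆ t : Set.Icc (0:ℝ) T, gam m μ (P (t : ℝ) f) (P (t : ℝ) f) x := by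
    intro x
    refine le_trans (gam_nonneg hm hnn hlf (P ((0:ℝ)) f) x) ?_
    exact le_ciSup (hbdd x) ⟨0, le_refl 0, hT.le⟩
  -- the key per-time ℓ¹ bound
  have hkey : ∀ s₀ : ℝ, s₀ ∈ Set.Icc (0:ℝ) T → ∀ F : Finset V,
      ∑ x ∈ F, |2 * gam m μ (P s₀ f) (P s₀ (lap m μ f)) x| * m x
        ≤ C * l2n m f * l2n m (lap m μ f)
          + C * l2n m (lap m μ f) * l2n m (lap m μ (lap m μ f)) := by
    intro s₀ hs F
    have hs0 : (0:ℝ) ≤ s₀ := hs.1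
    have hu2 : Summable fun x => P s₀ f x ^ 2 * m x := (hPl2 f hf2 s₀ hs0).1
    have hv2 : Summable fun x => P s₀ (lap m μ f) x ^ 2 * m x := (hPl2 _ hflap2 s₀ hs0).1
    have huw : Summable fun x => lap m μ (P s₀ f) x ^ 2 * m x := by
      rw [← hPcomm f hf s₀]
      exact hv2
    have hvw : Summable fun x => lap m μ (P s₀ (lap m μ f)) x ^ 2 * m x := by
      rw [← hPcomm (lap m μ f) hlapfin s₀]
      exact (hPl2 _ hflap22 s₀ hs0).1
    obtain ⟨hSu, hQu⟩ := gam_l1 hm hsym hnn hlf η hηfin hηmono hηlim hηgam (P s₀ f) hu2 huw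
    obtain ⟨hSv, hQv⟩ := gam_l1 hm hsym hnn hlf η hηfin hηmono hηlim hηgam
      (P s₀ (lap m μ f)) hv2 hvw
    have hQub : ∑' x, gam m μ (P s₀ f) (P s₀ f) x * m x ≤ C * l2n m f * l2n m (lap m μ f) := by
      rw [hQu]
      exact hCenergy f hf s₀ hs0
    have hQvb : ∑' x, gam m μ (P s₀ (lap m μ f)) (P s₀ (lap m μ f)) x * m x
        ≤ C * l2n m (lap m μ f) * l2n m (lap m μ (lap m μ f)) := by
      rw [hQv]
      exact hCenergy (lap m μ f) hlapfin s₀ hs0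
    calc ∑ x ∈ F, |2 * gam m μ (P s₀ f) (P s₀ (lap m μ f)) x| * m x
        ≤ ∑ x ∈ F, (gam m μ (P s₀ f) (P s₀ f) x * m x
            + gam m μ (P s₀ (lap m μ f)) (P s₀ (lap m μ f)) x * m x) := by
          apply Finset.sum_le_sum
          intro x _
          have h3 := gam_abs_le hm hnn hlf (P s₀ f) (P s₀ (lap m μ f)) x
          calc |2 * gam m μ (P s₀ f) (P s₀ (lap m μ f)) x| * m x
              = (2 * |gam m μ (P s₀ f) (P s₀ (lap m μ f)) x|) * m x := by
                rw [abs_mul, abs_two]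
            _ ≤ (gam m μ (P s₀ f) (P s₀ f) x
                + gam m μ (P s₀ (lap m μ f)) (P s₀ (lap m μ f)) x) * m x :=
                mul_le_mul_of_nonneg_right h3 (hm x).le
            _ = gam m μ (P s₀ f) (P s₀ f) x * m x
                + gam m μ (P s₀ (lap m μ f)) (P s₀ (lap m μ f)) x * m x := by ring
      _ = (∑ x ∈ F, gam m μ (P s₀ f) (P s₀ f) x * m x)
          + ∑ x ∈ F, gam m μ (P s₀ (lap m μ f)) (P s₀ (lap m μ f)) x * m x :=
          Finset.sum_add_distrib
      _ ≤ (∑' x, gam m μ (P s₀ f) (P s₀ f) x * m x)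
          + ∑' x, gam m μ (P s₀ (lap m μ f)) (P s₀ (lap m μ f)) x * m x :=
          add_le_add
            (Summable.sum_le_tsum F (fun x _ =>
              mul_nonneg (gam_nonneg hm hnn hlf _ x) (hm x).le) hSu)
            (Summable.sum_le_tsum F (fun x _ =>
              mul_nonneg (gam_nonneg hm hnn hlf _ x) (hm x).le) hSv)
      _ ≤ _ := add_le_add hQub hQvb
  -- ℓ¹ bound of the integrals, uniform over finite sets
  have hIm : ∀ F : Finset V,
      ∑ x ∈ F, (∫ s in (0:ℝ)..T, |2 * gam m μ (P s f) (P s (lap m μ f)) x|) * m x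
        ≤ T * (C * l2n m f * l2n m (lap m μ f)
            + C * l2n m (lap m μ f) * l2n m (lap m μ (lap m μ f))) := by
    intro F
    have h1 : ∀ x ∈ F, (∫ s in (0:ℝ)..T, |2 * gam m μ (P s f) (P s (lap m μ f)) x|) * m x
        = ∫ s in (0:ℝ)..T, |2 * gam m μ (P s f) (P s (lap m μ f)) x| * m x :=
      fun x _ => (intervalIntegral.integral_mul_const _ _).symm
    rw [Finset.sum_congr rfl h1]
    have hint2 : ∀ x ∈ F, IntervalIntegrable
        (fun s => |2 * gam m μ (P s f) (P s (lap m μ f)) x| * m x)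
        MeasureTheory.volume 0 T :=
      fun x _ => ((habscont x).mul continuous_const).intervalIntegrable 0 T
    rw [← intervalIntegral.integral_finset_sum hint2]
    have h2 : ∫ s in (0:ℝ)..T, ∑ x ∈ F, |2 * gam m μ (P s f) (P s (lap m μ f)) x| * m x
        ≤ ∫ s in (0:ℝ)..T, (C * l2n m f * l2n m (lap m μ f)
            + C * l2n m (lap m μ f) * l2n m (lap m μ (lap m μ f))) := by
      apply intervalIntegral.integral_mono_on hT.le ?_ intervalIntegrable_const
      · intro s hs
        exact hkey s hs F
      · exact (continuous_finset_sum F fun x _ =>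
          (habscont x).mul continuous_const).intervalIntegrable 0 T
    have h3 : ∫ s in (0:ℝ)..T, (C * l2n m f * l2n m (lap m μ f)
          + C * l2n m (lap m μ f) * l2n m (lap m μ (lap m μ f)))
        = T * (C * l2n m f * l2n m (lap m μ f)
          + C * l2n m (lap m μ f) * l2n m (lap m μ (lap m μ f))) := by
      rw [intervalIntegral.integral_const, smul_eq_mul, sub_zero]
    linarith
  have hI0 : ∀ x, 0 ≤ (∫ s in (0:ℝ)..T, |2 * gam m μ (P s f) (P s (lap m μ f)) x|) * m x :=
    fun x => mul_nonneg
      (intervalIntegral.integral_nonneg hT.le fun s _ => abs_nonneg _) (hm x).le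
  have hIsum : Summable fun x =>
      (∫ s in (0:ℝ)..T, |2 * gam m μ (P s f) (P s (lap m μ f)) x|) * m x :=
    summable_of_sum_le hI0 hIm
  have hImaj : Summable fun x =>
      (gam m μ f f x + ∫ s in (0:ℝ)..T, |2 * gam m μ (P s f) (P s (lap m μ f)) x|) * m x := by
    have h5 := hgamsum.add hIsum
    simpa [add_mul] using h5
  have hmono : ∀ x, (⨆ t : Set.Icc (0:ℝ) T, gam m μ (P (t : ℝ) f) (P (t : ℝ) f) x) * m x
      ≤ (gam m μ f f x + ∫ s in (0:ℝ)..T, |2 * gam m μ (P s f) (P s (lap m μ f)) x|) * m x :=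
    fun x => mul_le_mul_of_nonneg_right (hsup_le x) (hm x).le
  have hmain_sum : Summable fun x =>
      (⨆ t : Set.Icc (0:ℝ) T, gam m μ (P (t : ℝ) f) (P (t : ℝ) f) x) * m x :=
    Summable.of_nonneg_of_le (fun x => mul_nonneg (hsup_nn x) (hm x).le) hmono hImaj
  refine ⟨hmain_sum, ?_⟩
  have hineq1 : ∑' x, (⨆ t : Set.Icc (0:ℝ) T, gam m μ (P (t : ℝ) f) (P (t : ℝ) f) x) * m x
      ≤ ∑' x, (gam m μ f f x
          + ∫ s in (0:ℝ)..T, |2 * gam m μ (P s f) (P s (lap m μ f)) x|) * m x :=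
    Summable.tsum_le_tsum hmono hmain_sum hImaj
  have hsplit : ∑' x, (gam m μ f f x
        + ∫ s in (0:ℝ)..T, |2 * gam m μ (P s f) (P s (lap m μ f)) x|) * m x
      = (∑' x, gam m μ f f x * m x)
        + ∑' x, (∫ s in (0:ℝ)..T, |2 * gam m μ (P s f) (P s (lap m μ f)) x|) * m x := by
    rw [tsum_congr (fun x => add_mul (gam m μ f f x)
      (∫ s in (0:ℝ)..T, |2 * gam m μ (P s f) (P s (lap m μ f)) x|) (m x))]
    exact Summable.tsum_add hgamsum hIsum
  have hItsum : ∑' x, (∫ s in (0:ℝ)..T, |2 * gam m μ (P s f) (P s (lap m μ f)) x|) * m x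
      ≤ T * (C * l2n m f * l2n m (lap m μ f)
          + C * l2n m (lap m μ f) * l2n m (lap m μ (lap m μ f))) :=
    Summable.tsum_le_of_sum_le hIsum hIm
  have hfinal : T * (C * l2n m f * l2n m (lap m μ f)
        + C * l2n m (lap m μ f) * l2n m (lap m μ (lap m μ f)))
      = C * T * l2n m (lap m μ f) * (l2n m f + l2n m (lap m μ (lap m μ f))) := by ring
  linarith
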